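/- Along any edge of the dual graph of the regular triangular tiling, the coordinate sums of the cubulation images of the two endpoint triangles are 0 and 1 (in some order); i.e., each edge connects a vertex with coordinate sum 0 to a vertex with coordinate sum 1. -/

import Mathlib

noncomputable def lineF : Fin 3 → ℝ × ℝ → ℝ := fun i p =>
  if i = 0 then p.2 - 1/3
  else if i = 1 then (Real.sqrt 3 * p.1 - p.2) / 2 - 1/3
  else -(Real.sqrt 3 * p.1 + p.2) / 2 - 1/3

def triRegion (v : Fin 3 → ℤ) : Set (ℝ × ℝ) :=
  {p | ∀ i : Fin 3, ((v i : ℝ) - 1 ≤ lineF i p ∧ lineF i p ≤ (v i : ℝ))}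

def IsTile (v : Fin 3 → ℤ) : Prop := (interior (triRegion v)).Nonempty

abbrev Tile : Type := {v : Fin 3 → ℤ // IsTile v}

def Tile.region (T : Tile) : Set (ℝ × ℝ) := triRegion T.val

def EdgeAdj (T U : Tile) : Prop := T ≠ U ∧ ¬ (T.region ∩ U.region).Subsingleton

def VertexAdj (T U : Tile) : Prop := T ≠ U ∧ (T.region ∩ U.region).Nonempty

def sumv (v : Fin 3 → ℤ) : ℤ := v 0 + v 1 + v 2

def dualGraph : SimpleGraph Tile where
  Adj := EdgeAdj
  symm := ⟨fun T U h => ⟨h.1.symm, fun hs => h.2 (by rwa [Set.inter_comm] at hs)⟩⟩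
  loopless := ⟨fun T h => h.1 rfl⟩

lemma sqrt3_ne : Real.sqrt 3 ≠ 0 := by positivity

lemma lineF0 (p : ℝ × ℝ) : lineF 0 p = p.2 - 1/3 := by simp [lineF]
lemma lineF1 (p : ℝ × ℝ) : lineF 1 p = (Real.sqrt 3 * p.1 - p.2) / 2 - 1/3 := by
  simp [lineF]
lemma lineF2 (p : ℝ × ℝ) : lineF 2 p = -(Real.sqrt 3 * p.1 + p.2) / 2 - 1/3 := by
  simp [lineF]

lemma lineF_sum (p : ℝ × ℝ) : lineF 0 p + lineF 1 p + lineF 2 p = -1 := by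
  rw [lineF0, lineF1, lineF2]; ring

lemma key_inj (p q : ℝ × ℝ) (hy : p.2 = q.2)
    (hx : Real.sqrt 3 * p.1 - p.2 = Real.sqrt 3 * q.1 - q.2) : p = q := by
  have hs := sqrt3_ne
  have : Real.sqrt 3 * p.1 = Real.sqrt 3 * q.1 := by linarith
  exact Prod.ext (mul_left_cancel₀ hs this) hy

lemma lineF_inj {i j : Fin 3} (hij : i ≠ j) {p q : ℝ × ℝ}
    (h1 : lineF i p = lineF i q) (h2 : lineF j p = lineF j q) : p = q := by
  fin_cases i <;> fin_cases j <;> simp_all [lineF, Fin.ext_iff] <;>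
    exact key_inj p q (by linarith) (by simp_all)

lemma open_two_points {U : Set (ℝ × ℝ)} (hU : IsOpen U) (hne : U.Nonempty) :
    ∃ p q, p ∈ U ∧ q ∈ U ∧ p ≠ q := by
  obtain ⟨p, hp⟩ := hne
  obtain ⟨ε, hε, hball⟩ := Metric.isOpen_iff.1 hU p hp
  refine ⟨p, (p.1 + ε/2, p.2), hp, hball ?_, ?_⟩
  · have hd : dist ((p.1 + ε/2, p.2) : ℝ × ℝ) p < ε := by
      rw [Prod.dist_eq]
      have h1 : dist (p.1 + ε/2) p.1 = ε/2 := by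
        rw [Real.dist_eq, show p.1 + ε / 2 - p.1 = ε / 2 by ring]
        exact abs_of_pos (by linarith)
      simp only [h1, dist_self]
      rw [max_eq_left (by linarith)]
      linarith
    exact Metric.mem_ball.2 hd
  · intro hpq
    have h1 : p.1 = p.1 + ε/2 := congrArg Prod.fst hpq
    linarith

lemma tile_sum (v : Fin 3 → ℤ) (hv : IsTile v) : sumv v = 0 ∨ sumv v = 1 := by
  obtain ⟨p, q, hp, hq, hpq⟩ := open_two_points isOpen_interior hv
  have hp' := interior_subset hp
  have hq' := interior_subset hq
  have hp0 := hp' 0; have hp1 := hp' 1; have hp2 := hp' 2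
  have hq0 := hq' 0; have hq1 := hq' 1; have hq2 := hq' 2
  have hsp := lineF_sum p
  have hsq := lineF_sum q
  have hub : (-1 : ℝ) ≤ (v 0 : ℝ) + v 1 + v 2 := by linarith [hp0.2, hp1.2, hp2.2]
  have hlb : ((v 0 : ℝ) + v 1 + v 2) - 3 ≤ -1 := by linarith [hp0.1, hp1.1, hp2.1]
  have hub' : (-1 : ℤ) ≤ v 0 + v 1 + v 2 := by exact_mod_cast hub
  have hlb2 : ((v 0 : ℝ) + v 1 + v 2) ≤ 2 := by linarith
  have hlb' : v 0 + v 1 + v 2 ≤ 2 := by exact_mod_cast hlb2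
  -- exclude sum = -1
  have hne1 : v 0 + v 1 + v 2 ≠ -1 := by
    intro hsum
    have hr : (v 0 : ℝ) + v 1 + v 2 = -1 := by exact_mod_cast hsum
    have e0p : lineF 0 p = v 0 := by linarith [hp0.2, hp1.2, hp2.2]
    have e1p : lineF 1 p = v 1 := by linarith [hp0.2, hp1.2, hp2.2]
    have e0q : lineF 0 q = v 0 := by linarith [hq0.2, hq1.2, hq2.2]
    have e1q : lineF 1 q = v 1 := by linarith [hq0.2, hq1.2, hq2.2]
    exact hpq (lineF_inj (by decide : (0 : Fin 3) ≠ 1) (e0p.trans e0q.symm) (e1p.trans e1q.symm))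
  have hne2 : v 0 + v 1 + v 2 ≠ 2 := by
    intro hsum
    have hr : (v 0 : ℝ) + v 1 + v 2 = 2 := by exact_mod_cast hsum
    have e0p : lineF 0 p = (v 0 : ℝ) - 1 := by linarith [hp0.1, hp1.1, hp2.1]
    have e1p : lineF 1 p = (v 1 : ℝ) - 1 := by linarith [hp0.1, hp1.1, hp2.1]
    have e0q : lineF 0 q = (v 0 : ℝ) - 1 := by linarith [hq0.1, hq1.1, hq2.1]
    have e1q : lineF 1 q = (v 1 : ℝ) - 1 := by linarith [hq0.1, hq1.1, hq2.1]
    exact hpq (lineF_inj (by decide : (0 : Fin 3) ≠ 1) (e0p.trans e0q.symm) (e1p.trans e1q.symm))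
  unfold sumv
  omega

lemma pin {v w : Fin 3 → ℤ} (k : Fin 3) (hk : v k ≠ w k) {p : ℝ × ℝ}
    (hp : p ∈ triRegion v ∩ triRegion w) : lineF k p = min (v k : ℝ) (w k : ℝ) := by
  obtain ⟨hpv, hpw⟩ := hp
  have h1 := hpv k
  have h2 := hpw k
  rcases lt_or_gt_of_ne hk with hlt | hgt
  · have : (v k : ℝ) + 1 ≤ (w k : ℝ) := by exact_mod_cast hlt
    have hmin : min (v k : ℝ) (w k : ℝ) = (v k : ℝ) := min_eq_left (by linarith)
    rw [hmin]
    linarith [h1.2, h2.1]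
  · have : (w k : ℝ) + 1 ≤ (v k : ℝ) := by exact_mod_cast hgt
    have hmin : min (v k : ℝ) (w k : ℝ) = (w k : ℝ) := min_eq_right (by linarith)
    rw [hmin]
    linarith [h2.2, h1.1]

theorem coordinate_sums_alternate (T U : Tile) (h : EdgeAdj T U) :
    (sumv T.val = 0 ∧ sumv U.val = 1) ∨ (sumv T.val = 1 ∧ sumv U.val = 0) := by
  obtain ⟨hne, hns⟩ := h
  have hT := tile_sum T.val T.2
  have hU := tile_sum U.val U.2
  by_contra hcon
  push_neg at hcon
  have hsum : sumv T.val = sumv U.val := by omega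
  exfalso
  apply hns
  set v := T.val with hv
  set w := U.val with hw
  have hvw : v ≠ w := fun he => hne (Subtype.ext he)
  have hne3 : ¬(v 0 = w 0 ∧ v 1 = w 1 ∧ v 2 = w 2) := by
    rintro ⟨h0, h1, h2⟩
    exact hvw (funext fun k => by fin_cases k <;> assumption)
  have hsum' : v 0 + v 1 + v 2 = w 0 + w 1 + w 2 := hsum
  have h3 : (v 0 ≠ w 0 ∧ v 1 ≠ w 1) ∨ (v 0 ≠ w 0 ∧ v 2 ≠ w 2) ∨
      (v 1 ≠ w 1 ∧ v 2 ≠ w 2) := by omega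
  intro p hp q hq
  have hp' : p ∈ triRegion v ∩ triRegion w := hp
  have hq' : q ∈ triRegion v ∩ triRegion w := hq
  rcases h3 with ⟨ha, hb⟩ | ⟨ha, hb⟩ | ⟨ha, hb⟩
  · exact lineF_inj (by decide : (0 : Fin 3) ≠ 1)
      ((pin 0 ha hp').trans (pin 0 ha hq').symm)
      ((pin 1 hb hp').trans (pin 1 hb hq').symm)
  · exact lineF_inj (by decide : (0 : Fin 3) ≠ 2)
      ((pin 0 ha hp').trans (pin 0 ha hq').symm)
      ((pin 2 hb hp').trans (pin 2 hb hq').symm)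
  · exact lineF_inj (by decide : (1 : Fin 3) ≠ 2)
      ((pin 1 ha hp').trans (pin 1 ha hq').symm)
      ((pin 2 hb hp').trans (pin 2 hb hq').symm)
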